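/- Let 𝓖 be a multihypergraph on a finite vertex set V and let t and m be positive integers. Then there exists a sub-multiset 𝓖' of the edges of 𝓖 such that e(𝓖') ≥ e(𝓖) − m and Δ_t(𝓖') ≤ (1/m)·Σ_{T ⊆ V, |T| = t} deg_𝓖(T)². -/
import Mathlib

private lemma multiset_card_filter_or {α : Type*} (s : Multiset α) (p q : α → Prop)
    [DecidablePred p] [DecidablePred q] :
    Multiset.card (s.filter fun a => p a ∨ q a) ≤
      Multiset.card (s.filter p) + Multiset.card (s.filter q) := by
  have h := Multiset.filter_add_filter p q s
  have := congrArg Multiset.card h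
  rw [Multiset.card_add, Multiset.card_add] at this
  omega

private lemma multiset_card_filter_exists_le {α β : Type*} [DecidableEq β]
    (s : Multiset α) (B : Finset β) (r : β → α → Prop) [∀ b a, Decidable (r b a)] :
    Multiset.card (s.filter fun a => ∃ b ∈ B, r b a) ≤
      ∑ b ∈ B, Multiset.card (s.filter fun a => r b a) := by
  classical
  induction B using Finset.induction with
  | empty => simp [Multiset.filter_eq_nil]
  | @insert a B hb ih =>
    rw [Finset.sum_insert hb]
    have heq : (s.filter fun x => ∃ b ∈ insert a B, r b x) =
        s.filter fun x => r a x ∨ ∃ b ∈ B, r b x := by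
      apply Multiset.filter_congr
      intro x _
      simp [Finset.mem_insert, or_and_right, exists_or]
    rw [heq]
    calc Multiset.card (s.filter fun x => r a x ∨ ∃ b ∈ B, r b x)
        ≤ Multiset.card (s.filter fun x => r a x)
          + Multiset.card (s.filter fun x => ∃ b ∈ B, r b x) :=
          multiset_card_filter_or s _ _
      _ ≤ _ := by exact Nat.add_le_add_left ih _

/-- **Degree trimming for multihypergraphs.** From any multihypergraph `G` one
can delete at most `m` edges so that in the remaining multihypergraph every
`t`-element vertex set has degree at most `(1/m)·Σ_{|T|=t} deg_G(T)²`. -/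
theorem hypergraph_cleanup_l2_linf {V : Type*} [Fintype V] [DecidableEq V]
    (G : Multiset (Finset V)) (t m : ℕ) (ht : 0 < t) (hm : 0 < m) :
    ∃ G' : Multiset (Finset V), G' ≤ G ∧
      (Multiset.card G : ℝ) - m ≤ (Multiset.card G' : ℝ) ∧
      ∀ T : Finset V, T.card = t →
        ((Multiset.card (G'.filter fun e => T ⊆ e) : ℝ)) ≤
          (1 / (m : ℝ)) * ∑ T' ∈ Finset.univ.filter (fun T' : Finset V => T'.card = t),
            (Multiset.card (G.filter fun e => T' ⊆ e) : ℝ) ^ 2 := by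
  classical
  set deg : Finset V → ℕ := fun T => Multiset.card (G.filter fun e => T ⊆ e) with hdeg
  set N : ℕ := ∑ T' ∈ Finset.univ.filter (fun T' : Finset V => T'.card = t),
      (deg T') ^ 2 with hNdef
  set B : Finset (Finset V) := Finset.univ.filter
      (fun T => T.card = t ∧ N < m * deg T) with hBdef
  -- key: sum of degrees over bad sets is at most m
  have hsumB : ∑ T ∈ B, deg T ≤ m := by
    have h1 : ∀ T ∈ B, deg T * (N + 1) ≤ m * (deg T)^2 := by
      intro T hT
      have hT' := Finset.mem_filter.1 hT
      have h : N + 1 ≤ m * deg T := hT'.2.2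
      calc deg T * (N + 1) ≤ deg T * (m * deg T) := Nat.mul_le_mul_left _ h
        _ = m * (deg T)^2 := by ring
    have h2 : (∑ T ∈ B, deg T) * (N + 1) ≤ m * ∑ T ∈ B, (deg T)^2 := by
      rw [Finset.sum_mul, Finset.mul_sum]
      exact Finset.sum_le_sum h1
    have h3 : ∑ T ∈ B, (deg T)^2 ≤ N := by
      rw [hNdef]
      apply Finset.sum_le_sum_of_subset
      intro T hT
      have hT' := Finset.mem_filter.1 hT
      exact Finset.mem_filter.2 ⟨Finset.mem_univ _, hT'.2.1⟩
    have h4 : (∑ T ∈ B, deg T) * (N + 1) ≤ m * (N + 1) := by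
      calc (∑ T ∈ B, deg T) * (N + 1) ≤ m * N := h2.trans (Nat.mul_le_mul_left _ h3)
        _ ≤ m * (N + 1) := Nat.mul_le_mul_left _ (Nat.le_succ _)
    exact Nat.le_of_mul_le_mul_right h4 (Nat.succ_pos _)
  refine ⟨G.filter (fun e => ∀ T ∈ B, ¬ T ⊆ e), Multiset.filter_le _ _, ?_, ?_⟩
  · -- cardinality bound
    have hsplit : Multiset.card (G.filter fun e => ∀ T ∈ B, ¬ T ⊆ e)
        + Multiset.card (G.filter fun e => ¬ ∀ T ∈ B, ¬ T ⊆ e) = Multiset.card G := by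
      rw [← Multiset.card_add, Multiset.filter_add_not]
    have hdel : Multiset.card (G.filter fun e => ¬ ∀ T ∈ B, ¬ T ⊆ e) ≤ m := by
      have heq : (G.filter fun e => ¬ ∀ T ∈ B, ¬ T ⊆ e)
          = G.filter fun e => ∃ T ∈ B, T ⊆ e := by
        apply Multiset.filter_congr
        intro e _
        push_neg
        rfl
      rw [heq]
      calc Multiset.card (G.filter fun e => ∃ T ∈ B, T ⊆ e)
          ≤ ∑ T ∈ B, Multiset.card (G.filter fun e => T ⊆ e) :=
            multiset_card_filter_exists_le G B _
        _ = ∑ T ∈ B, deg T := rfl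
        _ ≤ m := hsumB
    have : (Multiset.card G : ℝ) ≤ Multiset.card (G.filter fun e => ∀ T ∈ B, ¬ T ⊆ e) + m := by
      push_cast [← hsplit]
      have : (Multiset.card (G.filter fun e => ¬ ∀ T ∈ B, ¬ T ⊆ e) : ℝ) ≤ m := by
        exact_mod_cast hdel
      linarith
    linarith
  · intro T hTcard
    have hNcast : ((N : ℝ)) = ∑ T' ∈ Finset.univ.filter (fun T' : Finset V => T'.card = t),
        (Multiset.card (G.filter fun e => T' ⊆ e) : ℝ) ^ 2 := by
      rw [hNdef]; push_cast; rfl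
    by_cases hTB : T ∈ B
    · -- all edges containing T were removed
      have hzero : (G.filter (fun e => ∀ T ∈ B, ¬ T ⊆ e)).filter (fun e => T ⊆ e) = 0 := by
        rw [Multiset.filter_eq_nil]
        intro e he hTe
        have := (Multiset.mem_filter.1 he).2
        exact this T hTB hTe
      rw [hzero]
      simp only [Multiset.card_zero, Nat.cast_zero]
      rw [← hNcast]
      positivity
    · -- degree was already small
      have hsmall : m * deg T ≤ N := by
        rw [hBdef] at hTB
        simp only [Finset.mem_filter, Finset.mem_univ, true_and, not_and, not_lt] at hTB
        exact hTB hTcard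
      have hle : Multiset.card ((G.filter (fun e => ∀ T ∈ B, ¬ T ⊆ e)).filter
          (fun e => T ⊆ e)) ≤ deg T := by
        apply Multiset.card_le_card
        exact Multiset.filter_le_filter _ (Multiset.filter_le _ _)
      rw [← hNcast]
      have hm' : (0:ℝ) < m := by exact_mod_cast hm
      rw [div_mul_eq_mul_div, one_mul, le_div_iff₀ hm']
      calc (Multiset.card ((G.filter (fun e => ∀ T ∈ B, ¬ T ⊆ e)).filter
            (fun e => T ⊆ e)) : ℝ) * m ≤ (deg T : ℝ) * m := by
            have : (Multiset.card ((G.filter (fun e => ∀ T ∈ B, ¬ T ⊆ e)).filter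
                (fun e => T ⊆ e)) : ℝ) ≤ (deg T : ℝ) := by exact_mod_cast hle
            nlinarith
        _ ≤ (N : ℝ) := by exact_mod_cast (by rw [mul_comm] at hsmall; exact hsmall)
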